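/- arXiv:1211.0834 — 3 statements merged into one kernel-verified Lean document; each statement's English description precedes it below -/
import Mathlib

section
/- For α = 2, the partial sum ∑_{m=2}^{n} 1/(m log₂ m) equals δ₁ + (ln 2)² · log₂ log₂ n for some δ₁ ∈ [0, 1/2] (depending on n). -/
/-- Base-2 logarithm. -/
noncomputable def log2 (x : ℝ) : ℝ := Real.log x / Real.log 2

lemma aux_A (x : ℝ) (hx : 2 ≤ x) :
    Real.log (Real.log (x + 1)) - Real.log (Real.log x) ≤ 1 / (x * Real.log x) := by
  have hx0 : (0:ℝ) < x := by linarith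
  have ha : 0 < Real.log x := Real.log_pos (by linarith)
  have hb : Real.log x < Real.log (x + 1) := Real.log_lt_log hx0 (by linarith)
  have hb0 : 0 < Real.log (x + 1) := lt_trans ha hb
  have h1 : Real.log (x + 1) - Real.log x ≤ 1 / x := by
    rw [← Real.log_div (by linarith) (by positivity)]
    have he : (x + 1) / x = 1 + 1 / x := by field_simp
    rw [he]
    have := Real.log_le_sub_one_of_pos (show (0:ℝ) < 1 + 1 / x by positivity)
    linarith
  have h2 : Real.log (Real.log (x + 1)) - Real.log (Real.log x)
      ≤ (Real.log (x + 1) - Real.log x) / Real.log x := by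
    rw [← Real.log_div hb0.ne' ha.ne']
    have h := Real.log_le_sub_one_of_pos (div_pos hb0 ha)
    have he : Real.log (x + 1) / Real.log x - 1
        = (Real.log (x + 1) - Real.log x) / Real.log x := by field_simp
    linarith [he ▸ h]
  have h3 : (Real.log (x + 1) - Real.log x) / Real.log x ≤ (1 / x) / Real.log x := by gcongr
  have he : (1 / x) / Real.log x = 1 / (x * Real.log x) := by rw [div_div]
  linarith [he ▸ h3]

lemma aux_B (x : ℝ) (hx : 2 ≤ x) :
    1 / ((x + 1) * Real.log (x + 1)) ≤
      Real.log (Real.log (x + 1)) - Real.log (Real.log x) := by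
  have hx0 : (0:ℝ) < x := by linarith
  have ha : 0 < Real.log x := Real.log_pos (by linarith)
  have hb : Real.log x < Real.log (x + 1) := Real.log_lt_log hx0 (by linarith)
  have hb0 : 0 < Real.log (x + 1) := lt_trans ha hb
  have h1 : 1 / (x + 1) ≤ Real.log (x + 1) - Real.log x := by
    have h := Real.log_le_sub_one_of_pos (show (0:ℝ) < x / (x + 1) by positivity)
    rw [Real.log_div (by positivity) (by positivity)] at h
    have he : x / (x + 1) - 1 = -(1 / (x + 1)) := by field_simp; ring
    linarith [he ▸ h]
  have h2 : (Real.log (x + 1) - Real.log x) / Real.log (x + 1)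
      ≤ Real.log (Real.log (x + 1)) - Real.log (Real.log x) := by
    have h := Real.log_le_sub_one_of_pos (div_pos ha hb0)
    rw [Real.log_div ha.ne' hb0.ne'] at h
    have he : Real.log x / Real.log (x + 1) - 1
        = -((Real.log (x + 1) - Real.log x) / Real.log (x + 1)) := by field_simp; ring
    linarith [he ▸ h]
  have h3 : (1 / (x + 1)) / Real.log (x + 1)
      ≤ (Real.log (x + 1) - Real.log x) / Real.log (x + 1) := by gcongr
  have he : (1 / (x + 1)) / Real.log (x + 1) = 1 / ((x + 1) * Real.log (x + 1)) := by rw [div_div]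
  linarith [he ▸ h3]

lemma sum_lower (n : ℕ) (hn : 2 ≤ n) :
    Real.log (Real.log ((n : ℝ) + 1)) - Real.log (Real.log 2)
      ≤ ∑ m ∈ Finset.Icc 2 n, 1 / ((m : ℝ) * Real.log m) := by
  induction n, hn using Nat.le_induction with
  | base =>
    simp only [Finset.Icc_self, Finset.sum_singleton]
    have := aux_A 2 le_rfl
    norm_num at this ⊢
    linarith
  | succ n hn ih =>
    rw [Finset.sum_Icc_succ_top (by omega)]
    have hnr : (2:ℝ) ≤ (n : ℝ) := by exact_mod_cast hn
    have hA := aux_A ((n : ℝ) + 1) (by linarith)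
    push_cast
    push_cast at ih hA
    linarith

lemma sum_upper (n : ℕ) (hn : 2 ≤ n) :
    ∑ m ∈ Finset.Icc 2 n, 1 / ((m : ℝ) * Real.log m)
      ≤ 1 / (2 * Real.log 2) + (Real.log (Real.log n) - Real.log (Real.log 2)) := by
  induction n, hn using Nat.le_induction with
  | base =>
    simp only [Finset.Icc_self, Finset.sum_singleton]
    norm_num
  | succ n hn ih =>
    rw [Finset.sum_Icc_succ_top (by omega)]
    have hB := aux_B (n : ℝ) (by exact_mod_cast hn)
    push_cast
    push_cast at ih hB
    linarith

/-- For `α = 2` and every `n ≥ 2`, there is `δ₁ ∈ [0, 1/2]` (depending on `n`) with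
`∑_{m=2}^{n} 1/(m log₂ m) = δ₁ + (ln 2)² log₂ log₂ n`. -/
theorem partial_sum_asymp_alpha_two (n : ℕ) (hn : 2 ≤ n) :
    ∃ δ₁ : ℝ, 0 ≤ δ₁ ∧ δ₁ ≤ 1 / 2 ∧
      ∑ m ∈ Finset.Icc 2 n, 1 / ((m : ℝ) * log2 m) =
        δ₁ + Real.log 2 ^ 2 * log2 (log2 n) := by
  have h2 : (0:ℝ) < Real.log 2 := Real.log_pos (by norm_num)
  have hn2 : (2:ℝ) ≤ (n : ℝ) := by exact_mod_cast hn
  have hlogn : 0 < Real.log n := Real.log_pos (by linarith)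
  -- rewrite the sum
  have hsum : ∑ m ∈ Finset.Icc 2 n, 1 / ((m : ℝ) * log2 m)
      = Real.log 2 * ∑ m ∈ Finset.Icc 2 n, 1 / ((m : ℝ) * Real.log m) := by
    rw [Finset.mul_sum]
    apply Finset.sum_congr rfl
    intro m hm
    have hm2 : 2 ≤ m := (Finset.mem_Icc.mp hm).1
    have hm2' : (2:ℝ) ≤ (m:ℝ) := by exact_mod_cast hm2
    have hlm : 0 < Real.log m := Real.log_pos (by linarith)
    unfold log2
    field_simp
  -- rewrite the RHS coefficient
  have hRHS : Real.log 2 ^ 2 * log2 (log2 n)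
      = Real.log 2 * (Real.log (Real.log n) - Real.log (Real.log 2)) := by
    unfold log2
    rw [Real.log_div hlogn.ne' h2.ne']
    field_simp
  set S := ∑ m ∈ Finset.Icc 2 n, 1 / ((m : ℝ) * Real.log m) with hS
  have hlow := sum_lower n hn
  have hup := sum_upper n hn
  have hmono : Real.log (Real.log n) ≤ Real.log (Real.log ((n : ℝ) + 1)) := by
    have h1 : Real.log (n : ℝ) ≤ Real.log ((n : ℝ) + 1) :=
      Real.log_le_log (by linarith) (by linarith)
    exact Real.log_le_log hlogn h1
  refine ⟨Real.log 2 * (S - (Real.log (Real.log n) - Real.log (Real.log 2))), ?_, ?_, ?_⟩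
  · have : Real.log (Real.log n) - Real.log (Real.log 2) ≤ S := by linarith
    nlinarith
  · have h12 : Real.log 2 * (1 / (2 * Real.log 2)) = 1 / 2 := by
      field_simp
    nlinarith
  · rw [hsum, hRHS]; ring
end

section
/- If X and Y are discrete random variables and B an event, then I(X;Y) ≤ P(B)·I(X;Y|B) + P(Bᶜ)·I(X;Y|Bᶜ) + 1. -/
open MeasureTheory ProbabilityTheory

/-- Probability of an event, as a real number. -/
noncomputable def pr {Ω : Type*} [MeasurableSpace Ω] (μ : Measure Ω) (A : Set Ω) : ℝ :=
  (μ A).toReal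

/-- Shannon entropy (in bits) of a discrete random variable. -/
noncomputable def Hent {Ω S : Type*} [MeasurableSpace Ω] (μ : Measure Ω) (X : Ω → S) : ℝ :=
  ∑' s : S, -(pr μ (X ⁻¹' {s}) * log2 (pr μ (X ⁻¹' {s})))

/-- Shannon mutual information `I(X;Y) = H(X) + H(Y) − H(X,Y)`. -/
noncomputable def MI {Ω S T : Type*} [MeasurableSpace Ω] (μ : Measure Ω)
    (X : Ω → S) (Y : Ω → T) : ℝ :=
  Hent μ X + Hent μ Y - Hent μ (fun ω => (X ω, Y ω))

lemma log2_pos_denom : (0:ℝ) < Real.log 2 := Real.log_pos (by norm_num)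

lemma log2_mono {x y : ℝ} (hx : 0 < x) (h : x ≤ y) : log2 x ≤ log2 y :=
  div_le_div_of_nonneg_right (Real.log_le_log hx h) log2_pos_denom.le

lemma logsum_nat {a b A BB : ℝ} (ha : 0 ≤ a) (hb : 0 ≤ b) (hA : 0 ≤ A) (hab : a ≤ b)
    (haA : a ≤ A) (hBB : 0 < BB) :
    a * Real.log (A / BB) + (a - b * A / BB) ≤ a * Real.log (a / b) := by
  rcases eq_or_lt_of_le ha with h0 | ha
  · rw [← h0]
    have : 0 ≤ b * A / BB := by positivity
    simp only [zero_mul, zero_add, zero_sub, mul_zero]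
    linarith
  · have hb : 0 < b := lt_of_lt_of_le ha hab
    have hA : 0 < A := lt_of_lt_of_le ha haA
    have ht : 0 < A * b / (BB * a) := by positivity
    have key := Real.log_le_sub_one_of_pos ht
    have e1 : Real.log (A * b / (BB * a)) = Real.log (A/BB) - Real.log (a/b) := by
      rw [Real.log_div (by positivity) (by positivity), Real.log_div (ne_of_gt hA) (ne_of_gt hBB),
        Real.log_div (ne_of_gt ha) (ne_of_gt hb), Real.log_mul (ne_of_gt hA) (ne_of_gt hb),
        Real.log_mul (ne_of_gt hBB) (ne_of_gt ha)]
      ring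
    rw [e1] at key
    have h3 : a * (Real.log (A/BB) - Real.log (a/b)) ≤ b * A / BB - a := by
      calc a * (Real.log (A/BB) - Real.log (a/b)) ≤ a * (A * b / (BB * a) - 1) :=
            mul_le_mul_of_nonneg_left key ha.le
        _ = b * A / BB - a := by field_simp
    have h4 : a * (Real.log (A/BB) - Real.log (a/b))
        = a * Real.log (A/BB) - a * Real.log (a/b) := by ring
    linarith

/-- two-term log-sum inequality in log2 -/
lemma logsum2 {a1 a2 b1 b2 : ℝ} (ha1 : 0 ≤ a1) (ha2 : 0 ≤ a2)
    (h1 : a1 ≤ b1) (h2 : a2 ≤ b2) :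
    (a1 + a2) * log2 ((a1 + a2) / (b1 + b2)) ≤ a1 * log2 (a1 / b1) + a2 * log2 (a2 / b2) := by
  have hb1 : 0 ≤ b1 := le_trans ha1 h1
  have hb2 : 0 ≤ b2 := le_trans ha2 h2
  rcases eq_or_lt_of_le (by linarith : (0:ℝ) ≤ b1 + b2) with hBB | hBB
  · have hb1' : b1 = 0 := by linarith
    have hb2' : b2 = 0 := by linarith
    have ea1 : a1 = 0 := le_antisymm (hb1' ▸ h1) ha1
    have ea2 : a2 = 0 := le_antisymm (hb2' ▸ h2) ha2
    rw [ea1, ea2]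
    simp
  · have k1 := logsum_nat ha1 hb1 (by linarith : (0:ℝ) ≤ a1 + a2) h1 (by linarith) hBB
    have k2 := logsum_nat ha2 hb2 (by linarith : (0:ℝ) ≤ a1 + a2) h2 (by linarith) hBB
    have hsum : (a1 + a2) * Real.log ((a1 + a2) / (b1 + b2))
        ≤ a1 * Real.log (a1 / b1) + a2 * Real.log (a2 / b2) := by
      have e : b1 * ((a1+a2) / (b1+b2)) + b2 * ((a1+a2)/(b1+b2)) = a1 + a2 := by
        field_simp
      have e2 : (a1+a2) * Real.log ((a1+a2)/(b1+b2))
          = a1 * Real.log ((a1+a2)/(b1+b2)) + a2 * Real.log ((a1+a2)/(b1+b2)) := by ring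
      have e3 : b1 * ((a1+a2)/(b1+b2)) = b1 * (a1+a2) / (b1+b2) := by ring
      have e4 : b2 * ((a1+a2)/(b1+b2)) = b2 * (a1+a2) / (b1+b2) := by ring
      linarith
    unfold log2
    have hd := div_le_div_of_nonneg_right hsum log2_pos_denom.le
    calc (a1 + a2) * (Real.log ((a1+a2)/(b1+b2)) / Real.log 2)
        = ((a1 + a2) * Real.log ((a1+a2)/(b1+b2))) / Real.log 2 := by ring
      _ ≤ (a1 * Real.log (a1/b1) + a2 * Real.log (a2/b2)) / Real.log 2 := hd
      _ = a1 * (Real.log (a1/b1) / Real.log 2) + a2 * (Real.log (a2/b2) / Real.log 2) := by ring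


lemma bin_term {p : ℝ} (hp : 0 ≤ p) : p * (-(log2 p)) ≤ (1/2 - p)/Real.log 2 + p := by
  rcases eq_or_lt_of_le hp with h0 | hp'
  · rw [← h0]; simp; positivity
  · have h1 : Real.log (1/(2*p)) ≤ 1/(2*p) - 1 := Real.log_le_sub_one_of_pos (by positivity)
    have h2 : p * Real.log (1/(2*p)) ≤ 1/2 - p := by
      calc p * Real.log (1/(2*p)) ≤ p * (1/(2*p) - 1) := mul_le_mul_of_nonneg_left h1 hp
        _ = 1/2 - p := by field_simp
    have h3 : Real.log (1/(2*p)) = -(Real.log 2) - Real.log p := by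
      rw [one_div, Real.log_inv, Real.log_mul two_ne_zero (ne_of_gt hp')]; ring
    rw [h3] at h2
    have h4 : -(p * Real.log p) ≤ 1/2 - p + p * Real.log 2 := by nlinarith
    have h5 := div_le_div_of_nonneg_right h4 log2_pos_denom.le
    calc p * (-(log2 p)) = (-(p * Real.log p)) / Real.log 2 := by unfold log2; ring
      _ ≤ (1/2 - p + p * Real.log 2) / Real.log 2 := h5
      _ = (1/2 - p)/Real.log 2 + p := by field_simp
lemma binent {p q : ℝ} (hp : 0 ≤ p) (hq : 0 ≤ q) (hpq : p + q = 1) :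
    p * (-(log2 p)) + q * (-(log2 q)) ≤ 1 := by
  have b1 := bin_term hp
  have b2 := bin_term hq
  have e : (1/2 - p)/Real.log 2 + (1/2 - q)/Real.log 2 = 0 := by
    rw [← add_div, div_eq_zero_iff]; left; linarith
  linarith

lemma neg_mul_log2_le {u z : ℝ} (hu : 0 ≤ u) (huz : u ≤ z) :
    -(u * log2 z) ≤ -(u * log2 u) := by
  rcases eq_or_lt_of_le hu with h0 | hu'
  · rw [← h0]; simp
  · exact neg_le_neg (mul_le_mul_of_nonneg_left (log2_mono hu' huz) hu)

lemma negmul_split {p x : ℝ} (hp : 0 ≤ p) (hx : 0 ≤ x) :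
    -(p * x * log2 (p * x)) = p * (-(x * log2 x)) + p * x * (-(log2 p)) := by
  rcases eq_or_lt_of_le hp with h0 | hp'
  · rw [← h0]; simp
  rcases eq_or_lt_of_le hx with h0 | hx'
  · rw [← h0]; simp
  have : log2 (p * x) = log2 p + log2 x := by
    unfold log2; rw [Real.log_mul (ne_of_gt hp') (ne_of_gt hx'), add_div]
  rw [this]; ring

lemma mix_entropy_pt {p q x y : ℝ} (hp : 0 ≤ p) (hq : 0 ≤ q) (hx : 0 ≤ x) (hy : 0 ≤ y) :
    -((p*x + q*y) * log2 (p*x + q*y)) ≤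
      p * (-(x * log2 x)) + q * (-(y * log2 y)) + (p*x*(-(log2 p)) + q*y*(-(log2 q))) := by
  have h1 : -((p*x) * log2 (p*x+q*y)) ≤ -((p*x) * log2 (p*x)) :=
    neg_mul_log2_le (by positivity) (by nlinarith)
  have h2 : -((q*y) * log2 (p*x+q*y)) ≤ -((q*y) * log2 (q*y)) :=
    neg_mul_log2_le (by positivity) (by nlinarith)
  have s1 := negmul_split hp hx
  have s2 := negmul_split hq hy
  have e : -((p*x + q*y) * log2 (p*x + q*y))
      = -((p*x) * log2 (p*x+q*y)) + -((q*y) * log2 (p*x+q*y)) := by ring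
  linarith


lemma pr_nonneg {Ω : Type*} [MeasurableSpace Ω] (μ : Measure Ω) (A : Set Ω) : 0 ≤ pr μ A :=
  ENNReal.toReal_nonneg

lemma cond_le_one {Ω : Type*} [MeasurableSpace Ω] (μ : Measure Ω) [IsFiniteMeasure μ]
    {B : Set Ω} (hB : MeasurableSet B) (A : Set Ω) : (μ[|B]) A ≤ 1 := by
  rw [cond_apply hB]
  rcases eq_or_ne (μ B) 0 with h0 | h0
  · have : μ (B ∩ A) = 0 := measure_mono_null Set.inter_subset_left h0
    simp [this]
  · calc (μ B)⁻¹ * μ (B ∩ A) ≤ (μ B)⁻¹ * μ B :=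
        mul_le_mul_right (measure_mono Set.inter_subset_left) _
      _ = 1 := ENNReal.inv_mul_cancel h0 (measure_ne_top μ B)

lemma cond_ne_top {Ω : Type*} [MeasurableSpace Ω] (μ : Measure Ω) [IsFiniteMeasure μ]
    {B : Set Ω} (hB : MeasurableSet B) (A : Set Ω) : (μ[|B]) A ≠ ⊤ :=
  ne_top_of_le_ne_top ENNReal.one_ne_top (cond_le_one μ hB A)

lemma pr_mono {Ω : Type*} [MeasurableSpace Ω] {ν : Measure Ω} {A A' : Set Ω}
    (hν : ν A ≠ ⊤) (h : A' ⊆ A) : pr ν A' ≤ pr ν A :=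
  ENNReal.toReal_mono hν (measure_mono h)

lemma pr_mix {Ω : Type*} [MeasurableSpace Ω] (μ : Measure Ω) [IsProbabilityMeasure μ]
    {B : Set Ω} (hB : MeasurableSet B) (A : Set Ω) :
    pr μ A = pr μ B * pr (μ[|B]) A + pr μ Bᶜ * pr (μ[|Bᶜ]) A := by
  have key : ∀ (C : Set Ω), MeasurableSet C → pr μ C * pr (μ[|C]) A = (μ (C ∩ A)).toReal := by
    intro C hC
    rw [pr, pr, cond_apply hC]
    rcases eq_or_ne (μ C) 0 with h0 | h0
    · have h1 : μ (C ∩ A) = 0 := measure_mono_null Set.inter_subset_left h0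
      simp [h0, h1]
    · rw [← ENNReal.toReal_mul, ← mul_assoc, ENNReal.mul_inv_cancel h0 (measure_ne_top μ C),
        one_mul]
  rw [key B hB, key Bᶜ hB.compl, pr, ← ENNReal.toReal_add (measure_ne_top _ _) (measure_ne_top _ _)]
  congr 1
  have := measure_inter_add_diff (μ := μ) A hB
  rw [Set.diff_eq] at this
  rw [Set.inter_comm B A, Set.inter_comm Bᶜ A, this]

/-- partition of a preimage under a pair map -/
lemma pr_marginal {Ω S T : Type*} [MeasurableSpace Ω] [Fintype S]
    [MeasurableSpace S] [MeasurableSingletonClass S]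
    [MeasurableSpace T] [MeasurableSingletonClass T]
    (ν : Measure Ω) (hν : ∀ A, ν A ≠ ⊤) {X : Ω → S} {Y : Ω → T}
    (hX : Measurable X) (hY : Measurable Y) (t : T) :
    pr ν (Y ⁻¹' {t}) = ∑ s : S, pr ν ((fun ω => (X ω, Y ω)) ⁻¹' {(s, t)}) := by
  have hset : Y ⁻¹' {t} = ⋃ s : S, ((fun ω => (X ω, Y ω)) ⁻¹' {(s, t)}) := by
    ext ω; simp [Prod.ext_iff]
  have hd : Pairwise (Function.onFun Disjoint fun s : S => ((fun ω => (X ω, Y ω)) ⁻¹' {(s, t)})) := by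
    intro s s' hss'
    rw [Function.onFun, Set.disjoint_left]
    rintro ω h1 h2
    simp only [Set.mem_preimage, Set.mem_singleton_iff, Prod.ext_iff] at h1 h2
    exact hss' (h1.1.symm.trans h2.1)
  have hm : ∀ s : S, MeasurableSet ((fun ω => (X ω, Y ω)) ⁻¹' {(s, t)}) :=
    fun s => (hX.prodMk hY) (measurableSet_singleton _)
  rw [pr, hset, measure_iUnion hd hm, tsum_fintype,
    ENNReal.toReal_sum (fun s _ => hν _)]
  rfl

lemma sum_pr_univ {Ω S : Type*} [MeasurableSpace Ω] [Fintype S]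
    [MeasurableSpace S] [MeasurableSingletonClass S]
    (ν : Measure Ω) (hν : ∀ A, ν A ≠ ⊤) {X : Ω → S} (hX : Measurable X) :
    ∑ s : S, pr ν (X ⁻¹' {s}) = (ν Set.univ).toReal := by
  have hset : (Set.univ : Set Ω) = ⋃ s : S, X ⁻¹' {s} := by
    ext ω; simp
  have hd : Pairwise (Function.onFun Disjoint fun s : S => X ⁻¹' {s}) := by
    intro s s' hss'
    rw [Function.onFun, Set.disjoint_left]
    rintro ω h1 h2
    simp only [Set.mem_preimage, Set.mem_singleton_iff] at h1 h2
    exact hss' (h1.symm.trans h2)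
  rw [hset, measure_iUnion hd (fun s => hX (measurableSet_singleton s)), tsum_fintype,
    ENNReal.toReal_sum (fun s _ => hν _)]
  rfl

section Aux
open Finset
variable {Ω S T : Type*} [MeasurableSpace Ω]

lemma neg_log2_nonneg {p : ℝ} (hp0 : 0 ≤ p) (hp1 : p ≤ 1) : 0 ≤ -(log2 p) := by
  have : Real.log p ≤ 0 := Real.log_nonpos hp0 hp1
  have : log2 p ≤ 0 := div_nonpos_of_nonpos_of_nonneg this log2_pos_denom.le
  linarith

lemma log2_div_expand {c b : ℝ} (hc : 0 ≤ c) (hcb : c ≤ b) :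
    c * log2 (c / b) = c * log2 c - c * log2 b := by
  rcases eq_or_lt_of_le hc with h0 | hc'
  · rw [← h0]; ring
  · have hb : 0 < b := lt_of_lt_of_le hc' hcb
    unfold log2
    rw [Real.log_div (ne_of_gt hc') (ne_of_gt hb)]
    ring

lemma scale_logterm {p c b : ℝ} (hp : 0 ≤ p) :
    (p * c) * log2 ((p * c) / (p * b)) = p * (c * log2 (c / b)) := by
  rcases eq_or_lt_of_le hp with h0 | hp'
  · rw [← h0]; ring
  · rw [mul_div_mul_left c b (ne_of_gt hp')]; ring

/-- Lemma A: entropy of a mixture is at most mixture of entropies plus 1. -/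
lemma hent_mix_le [Fintype S] (μ ν1 ν2 : Measure Ω) (p q : ℝ)
    (hp : 0 ≤ p) (hq : 0 ≤ q) (hpq : p + q = 1)
    (hmix : ∀ A : Set Ω, pr μ A = p * pr ν1 A + q * pr ν2 A)
    (X : Ω → S)
    (h1 : ∑ s : S, pr ν1 (X ⁻¹' {s}) ≤ 1) (h2 : ∑ s : S, pr ν2 (X ⁻¹' {s}) ≤ 1) :
    Hent μ X ≤ p * Hent ν1 X + q * Hent ν2 X + 1 := by
  have hp1 : p ≤ 1 := by linarith [hq]
  have hq1 : q ≤ 1 := by linarith [hp]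
  set c1 : ℝ := p * (-(log2 p)) with hc1
  set c2 : ℝ := q * (-(log2 q)) with hc2
  have hc1n : 0 ≤ c1 := mul_nonneg hp (neg_log2_nonneg hp hp1)
  have hc2n : 0 ≤ c2 := mul_nonneg hq (neg_log2_nonneg hq hq1)
  unfold Hent
  rw [tsum_fintype, tsum_fintype, tsum_fintype]
  have step1 : ∑ s : S, -(pr μ (X ⁻¹' {s}) * log2 (pr μ (X ⁻¹' {s})))
      ≤ ∑ s : S, (p * (-(pr ν1 (X ⁻¹' {s}) * log2 (pr ν1 (X ⁻¹' {s}))))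
          + q * (-(pr ν2 (X ⁻¹' {s}) * log2 (pr ν2 (X ⁻¹' {s}))))
          + (c1 * pr ν1 (X ⁻¹' {s}) + c2 * pr ν2 (X ⁻¹' {s}))) := by
    apply Finset.sum_le_sum
    intro s _
    rw [hmix (X ⁻¹' {s})]
    have := mix_entropy_pt hp hq (pr_nonneg ν1 (X ⁻¹' {s})) (pr_nonneg ν2 (X ⁻¹' {s}))
    calc -((p * pr ν1 (X ⁻¹' {s}) + q * pr ν2 (X ⁻¹' {s}))
            * log2 (p * pr ν1 (X ⁻¹' {s}) + q * pr ν2 (X ⁻¹' {s})))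
        ≤ p * (-(pr ν1 (X ⁻¹' {s}) * log2 (pr ν1 (X ⁻¹' {s}))))
          + q * (-(pr ν2 (X ⁻¹' {s}) * log2 (pr ν2 (X ⁻¹' {s}))))
          + (p * pr ν1 (X ⁻¹' {s}) * (-(log2 p)) + q * pr ν2 (X ⁻¹' {s}) * (-(log2 q))) := this
      _ = p * (-(pr ν1 (X ⁻¹' {s}) * log2 (pr ν1 (X ⁻¹' {s}))))
          + q * (-(pr ν2 (X ⁻¹' {s}) * log2 (pr ν2 (X ⁻¹' {s}))))
          + (c1 * pr ν1 (X ⁻¹' {s}) + c2 * pr ν2 (X ⁻¹' {s})) := by rw [hc1, hc2]; ring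
  have step2 : ∑ s : S, (p * (-(pr ν1 (X ⁻¹' {s}) * log2 (pr ν1 (X ⁻¹' {s}))))
          + q * (-(pr ν2 (X ⁻¹' {s}) * log2 (pr ν2 (X ⁻¹' {s}))))
          + (c1 * pr ν1 (X ⁻¹' {s}) + c2 * pr ν2 (X ⁻¹' {s})))
      = p * ∑ s : S, (-(pr ν1 (X ⁻¹' {s}) * log2 (pr ν1 (X ⁻¹' {s}))))
        + q * ∑ s : S, (-(pr ν2 (X ⁻¹' {s}) * log2 (pr ν2 (X ⁻¹' {s}))))
        + (c1 * ∑ s : S, pr ν1 (X ⁻¹' {s}) + c2 * ∑ s : S, pr ν2 (X ⁻¹' {s})) := by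
    simp [Finset.sum_add_distrib, Finset.mul_sum]
  have step3 : c1 * ∑ s : S, pr ν1 (X ⁻¹' {s}) + c2 * ∑ s : S, pr ν2 (X ⁻¹' {s}) ≤ 1 := by
    have b1 : c1 * ∑ s : S, pr ν1 (X ⁻¹' {s}) ≤ c1 := by
      calc c1 * ∑ s : S, pr ν1 (X ⁻¹' {s}) ≤ c1 * 1 := mul_le_mul_of_nonneg_left h1 hc1n
        _ = c1 := mul_one c1
    have b2 : c2 * ∑ s : S, pr ν2 (X ⁻¹' {s}) ≤ c2 := by
      calc c2 * ∑ s : S, pr ν2 (X ⁻¹' {s}) ≤ c2 * 1 := mul_le_mul_of_nonneg_left h2 hc2n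
        _ = c2 := mul_one c2
    have := binent hp hq hpq
    linarith
  rw [step2] at step1
  linarith [step1, step3]

/-- conditional entropy identity -/
lemma condent_eq [Fintype S] [Fintype T]
    [MeasurableSpace S] [MeasurableSingletonClass S]
    [MeasurableSpace T] [MeasurableSingletonClass T]
    (ν : Measure Ω) (hν : ∀ A, ν A ≠ ⊤) {X : Ω → S} {Y : Ω → T}
    (hX : Measurable X) (hY : Measurable Y) :
    Hent ν Y - Hent ν (fun ω => (X ω, Y ω)) =
      ∑ st : S × T, pr ν ((fun ω => (X ω, Y ω)) ⁻¹' {st})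
        * log2 (pr ν ((fun ω => (X ω, Y ω)) ⁻¹' {st}) / pr ν (Y ⁻¹' {st.2})) := by
  have hsub : ∀ st : S × T, (fun ω => (X ω, Y ω)) ⁻¹' {st} ⊆ Y ⁻¹' {st.2} := by
    intro st ω h
    simp only [Set.mem_preimage, Set.mem_singleton_iff] at h ⊢
    rw [← h]
  have hexp : ∀ st : S × T,
      pr ν ((fun ω => (X ω, Y ω)) ⁻¹' {st})
        * log2 (pr ν ((fun ω => (X ω, Y ω)) ⁻¹' {st}) / pr ν (Y ⁻¹' {st.2}))
      = pr ν ((fun ω => (X ω, Y ω)) ⁻¹' {st}) * log2 (pr ν ((fun ω => (X ω, Y ω)) ⁻¹' {st}))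
        - pr ν ((fun ω => (X ω, Y ω)) ⁻¹' {st}) * log2 (pr ν (Y ⁻¹' {st.2})) :=
    fun st => log2_div_expand (pr_nonneg _ _) (pr_mono (hν _) (hsub st))
  rw [Finset.sum_congr rfl (fun st _ => hexp st), Finset.sum_sub_distrib]
  have hmarg : ∑ st : S × T,
      pr ν ((fun ω => (X ω, Y ω)) ⁻¹' {st}) * log2 (pr ν (Y ⁻¹' {st.2}))
      = ∑ t : T, pr ν (Y ⁻¹' {t}) * log2 (pr ν (Y ⁻¹' {t})) := by
    rw [Fintype.sum_prod_type_right]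
    apply Finset.sum_congr rfl
    intro t _
    show ∑ x : S, pr ν ((fun ω => (X ω, Y ω)) ⁻¹' {(x, t)}) * log2 (pr ν (Y ⁻¹' {t}))
      = pr ν (Y ⁻¹' {t}) * log2 (pr ν (Y ⁻¹' {t}))
    rw [← Finset.sum_mul, ← pr_marginal ν hν hX hY t]
  rw [hmarg]
  unfold Hent
  rw [tsum_fintype, tsum_fintype, Finset.sum_neg_distrib, Finset.sum_neg_distrib]
  ring

/-- Lemma B: concavity of conditional entropy (negated form). -/
lemma condent_mix [Fintype S] [Fintype T]
    [MeasurableSpace S] [MeasurableSingletonClass S]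
    [MeasurableSpace T] [MeasurableSingletonClass T]
    (μ ν1 ν2 : Measure Ω) (p q : ℝ) (hp : 0 ≤ p) (hq : 0 ≤ q)
    (hν1 : ∀ A, ν1 A ≠ ⊤) (hν2 : ∀ A, ν2 A ≠ ⊤) (hν : ∀ A, μ A ≠ ⊤)
    (hmix : ∀ A : Set Ω, pr μ A = p * pr ν1 A + q * pr ν2 A)
    {X : Ω → S} {Y : Ω → T} (hX : Measurable X) (hY : Measurable Y) :
    Hent μ Y - Hent μ (fun ω => (X ω, Y ω)) ≤
      p * (Hent ν1 Y - Hent ν1 (fun ω => (X ω, Y ω)))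
      + q * (Hent ν2 Y - Hent ν2 (fun ω => (X ω, Y ω))) := by
  rw [condent_eq μ hν hX hY, condent_eq ν1 hν1 hX hY, condent_eq ν2 hν2 hX hY,
    Finset.mul_sum, Finset.mul_sum, ← Finset.sum_add_distrib]
  apply Finset.sum_le_sum
  intro st _
  have hsub : (fun ω => (X ω, Y ω)) ⁻¹' {st} ⊆ Y ⁻¹' {st.2} := by
    intro ω h
    simp only [Set.mem_preimage, Set.mem_singleton_iff] at h ⊢
    rw [← h]
  set C := (fun ω => (X ω, Y ω)) ⁻¹' {st}
  set D := Y ⁻¹' {st.2}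
  rw [hmix C, hmix D]
  have key := logsum2 (a1 := p * pr ν1 C) (a2 := q * pr ν2 C)
    (b1 := p * pr ν1 D) (b2 := q * pr ν2 D)
    (mul_nonneg hp (pr_nonneg _ _)) (mul_nonneg hq (pr_nonneg _ _))
    (mul_le_mul_of_nonneg_left (pr_mono (hν1 _) hsub) hp)
    (mul_le_mul_of_nonneg_left (pr_mono (hν2 _) hsub) hq)
  calc (p * pr ν1 C + q * pr ν2 C)
        * log2 ((p * pr ν1 C + q * pr ν2 C) / (p * pr ν1 D + q * pr ν2 D))
      ≤ (p * pr ν1 C) * log2 ((p * pr ν1 C) / (p * pr ν1 D))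
        + (q * pr ν2 C) * log2 ((q * pr ν2 C) / (q * pr ν2 D)) := key
    _ = p * (pr ν1 C * log2 (pr ν1 C / pr ν1 D))
        + q * (pr ν2 C * log2 (pr ν2 C / pr ν2 D)) := by
        rw [scale_logterm hp, scale_logterm hq]

end Aux

/-- `I(X;Y) ≤ P(B)·I(X;Y|B) + P(Bᶜ)·I(X;Y|Bᶜ) + 1`. -/
theorem mutualInfo_event_bound
    {Ω S T : Type*} [MeasurableSpace Ω] (μ : Measure Ω) [IsProbabilityMeasure μ]
    [MeasurableSpace S] [MeasurableSingletonClass S] [Finite S]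
    [MeasurableSpace T] [MeasurableSingletonClass T] [Finite T]
    (X : Ω → S) (Y : Ω → T) (hX : Measurable X) (hY : Measurable Y)
    (B : Set Ω) (hB : MeasurableSet B) :
    MI μ X Y ≤ pr μ B * MI (μ[|B]) X Y + pr μ Bᶜ * MI (μ[|Bᶜ]) X Y + 1 := by
  cases nonempty_fintype S
  cases nonempty_fintype T
  have hν1 : ∀ A, (μ[|B]) A ≠ ⊤ := cond_ne_top μ hB
  have hν2 : ∀ A, (μ[|Bᶜ]) A ≠ ⊤ := cond_ne_top μ hB.compl
  have hν : ∀ A : Set Ω, μ A ≠ ⊤ := fun A => measure_ne_top μ A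
  have hp : 0 ≤ pr μ B := pr_nonneg μ B
  have hq : 0 ≤ pr μ Bᶜ := pr_nonneg μ Bᶜ
  have hpq : pr μ B + pr μ Bᶜ = 1 := by
    rw [pr, pr, ← ENNReal.toReal_add (measure_ne_top _ _) (measure_ne_top _ _),
      measure_add_measure_compl hB, measure_univ]
    simp
  have hmix := pr_mix μ hB
  have h1 : ∑ s : S, pr (μ[|B]) (X ⁻¹' {s}) ≤ 1 := by
    rw [sum_pr_univ _ hν1 hX]
    calc ((μ[|B]) Set.univ).toReal ≤ (1 : ENNReal).toReal :=
          ENNReal.toReal_mono ENNReal.one_ne_top (cond_le_one μ hB Set.univ)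
      _ = 1 := by simp
  have h2 : ∑ s : S, pr (μ[|Bᶜ]) (X ⁻¹' {s}) ≤ 1 := by
    rw [sum_pr_univ _ hν2 hX]
    calc ((μ[|Bᶜ]) Set.univ).toReal ≤ (1 : ENNReal).toReal :=
          ENNReal.toReal_mono ENNReal.one_ne_top (cond_le_one μ hB.compl Set.univ)
      _ = 1 := by simp
  have HA := hent_mix_le μ (μ[|B]) (μ[|Bᶜ]) (pr μ B) (pr μ Bᶜ) hp hq hpq hmix X h1 h2
  have HB := condent_mix μ (μ[|B]) (μ[|Bᶜ]) (pr μ B) (pr μ Bᶜ) hp hq hν1 hν2 hν hmix hX hY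
  unfold MI
  have e1 : pr μ B * (Hent (μ[|B]) X + Hent (μ[|B]) Y - Hent (μ[|B]) (fun ω => (X ω, Y ω)))
      = pr μ B * Hent (μ[|B]) X
        + pr μ B * (Hent (μ[|B]) Y - Hent (μ[|B]) (fun ω => (X ω, Y ω))) := by ring
  have e2 : pr μ Bᶜ * (Hent (μ[|Bᶜ]) X + Hent (μ[|Bᶜ]) Y - Hent (μ[|Bᶜ]) (fun ω => (X ω, Y ω)))
      = pr μ Bᶜ * Hent (μ[|Bᶜ]) X
        + pr μ Bᶜ * (Hent (μ[|Bᶜ]) Y - Hent (μ[|Bᶜ]) (fun ω => (X ω, Y ω))) := by ring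
  linarith
end

section
/- Consequently, if the observable process X_i = f(Y_i) of a stationary countable-state Markov chain has unbounded block mutual information E(n) = I(X_{-n+1}^0; X_1^n) → ∞, then H(Y_0) = ∞; in particular Y_0 must take infinitely many values with positive probability. -/
open MeasureTheory ProbabilityTheory

/-- `(Y_i)_{i∈ℤ}` is a stationary Markov process with transition matrix `Q`: the finite
dimensional distributions over blocks of consecutive indices are given by the time-0
marginal followed by products of transition probabilities. -/
def IsMarkovWith {Ω S : Type*} [MeasurableSpace Ω] (μ : Measure Ω)
    (Y : ℤ → Ω → S) (Q : S → S → ℝ) : Prop :=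
  ∀ a b : ℤ, a ≤ b → ∀ y : ℤ → S,
    pr μ (⋂ j ∈ Set.Icc a b, (Y j) ⁻¹' {y j}) =
      pr μ ((Y 0) ⁻¹' {y a}) * ∏ j ∈ Finset.Ico a b, Q (y j) (y (j + 1))

/-- The past block `X_{-n+1}^0` of a process. -/
def pastBlock {Ω S : Type*} (X : ℤ → Ω → S) (n : ℕ) (ω : Ω) : Fin n → S :=
  fun i => X (-(n : ℤ) + 1 + (i : ℤ)) ω

/-- The future block `X_1^n` of a process. -/
def futureBlock {Ω S : Type*} (X : ℤ → Ω → S) (n : ℕ) (ω : Ω) : Fin n → S :=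
  fun i => X (1 + (i : ℤ)) ω

/-- Shannon entropy with values in `ℝ≥0∞` (so that infinite entropy is expressible). -/
noncomputable def HentE {Ω S : Type*} [MeasurableSpace Ω] (μ : Measure Ω) (X : Ω → S) :
    ENNReal :=
  ∑' s : S, ENNReal.ofReal (-(pr μ (X ⁻¹' {s}) * log2 (pr μ (X ⁻¹' {s}))))


lemma aux_tsum_zero {C : Type*} (t : C → ℝ) (ht0 : ∀ c, 0 ≤ t c) (hT : Summable t)
    (h : ∑' c, t c = 0) : ∀ c, t c = 0 := by
  intro c
  have h1 : t c ≤ ∑' c, t c := Summable.le_tsum hT c (fun j _ => ht0 j)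
  linarith [ht0 c]

lemma aux_gibbs {C : Type*} (t s : C → ℝ) (ht0 : ∀ c, 0 ≤ t c) (hs0 : ∀ c, 0 ≤ s c)
    (hts : ∀ c, t c ≠ 0 → s c ≠ 0) (hT : Summable t) (hS : Summable s)
    (hL : Summable (fun c => t c * Real.log (t c / s c))) :
    (∑' c, t c) * Real.log ((∑' c, t c) / (∑' c, s c)) ≤ ∑' c, t c * Real.log (t c / s c) := by
  set T := ∑' c, t c with hTdef
  set S := ∑' c, s c with hSdef
  have hT0 : 0 ≤ T := tsum_nonneg ht0
  have hS0 : 0 ≤ S := tsum_nonneg hs0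
  rcases eq_or_lt_of_le hT0 with hT0' | hTpos
  · -- T = 0 : all t vanish
    have hall : ∀ c, t c = 0 := aux_tsum_zero t ht0 hT hT0'.symm
    have h2 : ∑' c, t c * Real.log (t c / s c) = 0 := by
      have : ∀ c, t c * Real.log (t c / s c) = 0 := by
        intro c; rw [hall c]; ring
      rw [tsum_congr this, tsum_zero]
    rw [h2, ← hT0']
    simp
  · -- T > 0
    have hSne : S ≠ 0 := by
      intro hS0'
      have hall : ∀ c, s c = 0 := aux_tsum_zero s hs0 hS hS0'
      have hallt : ∀ c, t c = 0 := by
        intro c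
        by_contra h
        exact hts c h (hall c)
      have hz : T = 0 := by
        have : ∀ c, t c = (fun _ : C => (0:ℝ)) c := hallt
        rw [hTdef, tsum_congr this, tsum_zero]
      linarith
    have hSpos : 0 < S := lt_of_le_of_ne hS0 (Ne.symm hSne)
    have key : ∀ c, t c - s c * (T / S) ≤ t c * Real.log (t c / s c) + t c * Real.log (S / T) := by
      intro c
      rcases eq_or_lt_of_le (ht0 c) with h0 | hpos
      · rw [← h0]
        have : 0 ≤ s c * (T / S) := mul_nonneg (hs0 c) (div_nonneg hT0 hS0)
        simp only [zero_mul, zero_add, zero_sub, zero_add]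
        linarith
      · have hsc : 0 < s c := lt_of_le_of_ne (hs0 c) (Ne.symm (hts c (ne_of_gt hpos)))
        have hx : (0:ℝ) < s c * T / (t c * S) := by positivity
        have hlog : Real.log (s c * T / (t c * S)) ≤ s c * T / (t c * S) - 1 :=
          Real.log_le_sub_one_of_pos hx
        have hrw : t c * Real.log (t c / s c) + t c * Real.log (S / T) =
            t c * (- Real.log (s c * T / (t c * S))) := by
          rw [Real.log_div (ne_of_gt hpos) (ne_of_gt hsc),
            Real.log_div (ne_of_gt hSpos) (ne_of_gt hTpos),
            Real.log_div (by positivity) (by positivity),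
            Real.log_mul (ne_of_gt hsc) (ne_of_gt hTpos),
            Real.log_mul (ne_of_gt hpos) (ne_of_gt hSpos)]
          ring
        rw [hrw]
        have h2 : t c * (1 - s c * T / (t c * S)) ≤
            t c * (- Real.log (s c * T / (t c * S))) := by
          apply mul_le_mul_of_nonneg_left _ (le_of_lt hpos)
          linarith
        have h3 : t c * (1 - s c * T / (t c * S)) = t c - s c * (T / S) := by
          field_simp
        linarith
    have hsumL : Summable (fun c => t c - s c * (T / S)) := hT.sub (hS.mul_right _)
    have hsumR : Summable (fun c => t c * Real.log (t c / s c) + t c * Real.log (S / T)) :=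
      hL.add (hT.mul_right _)
    have hle := Summable.tsum_le_tsum key hsumL hsumR
    have hLsum : ∑' c, (t c - s c * (T / S)) = 0 := by
      rw [Summable.tsum_sub hT (hS.mul_right _), tsum_mul_right, ← hTdef, ← hSdef]
      field_simp
      simp
    have hRsum : ∑' c, (t c * Real.log (t c / s c) + t c * Real.log (S / T)) =
        (∑' c, t c * Real.log (t c / s c)) + T * Real.log (S / T) := by
      rw [Summable.tsum_add hL (hT.mul_right _), tsum_mul_right]
    rw [hLsum, hRsum] at hle
    have hlogTS : Real.log (T / S) = - Real.log (S / T) := by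
      rw [Real.log_div (ne_of_gt hSpos) (ne_of_gt hTpos),
        Real.log_div (ne_of_gt hTpos) (ne_of_gt hSpos)]
      ring
    rw [hlogTS]
    nlinarith [hle]


lemma aux_main {A B C : Type*} [Fintype A] [Fintype B]
    (pa : A → ℝ) (pb : B → ℝ) (pab : A → B → ℝ) (pc : C → ℝ)
    (pac : A → C → ℝ) (pcb : C → B → ℝ) (u : A → C → B → ℝ)
    (hu0 : ∀ a c b, 0 ≤ u a c b)
    (hpcb0 : ∀ c b, 0 ≤ pcb c b)
    (hpac0 : ∀ a c, 0 ≤ pac a c)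
    (hpc0 : ∀ c, 0 ≤ pc c) (hpc1 : ∀ c, pc c ≤ 1)
    (hu_pac : ∀ a c b, u a c b ≤ pac a c)
    (hu_pcb : ∀ a c b, u a c b ≤ pcb c b)
    (hpac_pa : ∀ a c, pac a c ≤ pa a)
    (hpcb_pc : ∀ c b, pcb c b ≤ pc c)
    (hci : ∀ a c b, u a c b * pc c = pac a c * pcb c b)
    (hsum_pc : Summable pc)
    (htsum_u : ∀ a b, ∑' c, u a c b = pab a b)
    (htsum_pcb : ∀ b, ∑' c, pcb c b = pb b)
    (hmarg_c : ∀ c, (∑ a, ∑ b, u a c b) = pc c)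
    (hmarg_a : ∀ a, (∑ b, pab a b) = pa a)
    (hmarg_b : ∀ b, (∑ a, pab a b) = pb b)
    (hH : Summable (fun c => -(pc c * Real.log (pc c)))) :
    ((∑ a, -(pa a * Real.log (pa a))) + (∑ b, -(pb b * Real.log (pb b)))
      - ∑ a, ∑ b, -(pab a b * Real.log (pab a b)))
      ≤ ∑' c, -(pc c * Real.log (pc c)) := by
  -- basic positivity facts
  have hsum_pcb : ∀ b, Summable (fun c => pcb c b) := fun b =>
    Summable.of_nonneg_of_le (fun c => hpcb0 c b) (fun c => hpcb_pc c b) hsum_pc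
  have hsum_u : ∀ a b, Summable (fun c => u a c b) := fun a b =>
    Summable.of_nonneg_of_le (fun c => hu0 a c b)
      (fun c => le_trans (hu_pcb a c b) (hpcb_pc c b)) hsum_pc
  have hpab0 : ∀ a b, 0 ≤ pab a b := fun a b => by
    rw [← htsum_u a b]; exact tsum_nonneg (fun c => hu0 a c b)
  have hpa0 : ∀ a, 0 ≤ pa a := fun a => by
    rw [← hmarg_a a]; exact Finset.sum_nonneg (fun b _ => hpab0 a b)
  have hpb0 : ∀ b, 0 ≤ pb b := fun b => by
    rw [← hmarg_b b]; exact Finset.sum_nonneg (fun a _ => hpab0 a b)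
  have hpab_pa : ∀ a b, pab a b ≤ pa a := fun a b => by
    rw [← hmarg_a a]
    exact Finset.single_le_sum (fun b _ => hpab0 a b) (Finset.mem_univ b)
  have hpab_pb : ∀ a b, pab a b ≤ pb b := fun a b => by
    rw [← hmarg_b b]
    exact Finset.single_le_sum (fun a _ => hpab0 a b) (Finset.mem_univ a)
  have hlnpc : ∀ c, 0 ≤ -Real.log (pc c) := by
    intro c
    rcases eq_or_lt_of_le (hpc0 c) with h | h
    · rw [← h]; simp
    · have := Real.log_nonpos (le_of_lt h) (hpc1 c)
      linarith
  have hHS : Summable (fun c => pc c * (-Real.log (pc c))) := by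
    have : ∀ c, pc c * (-Real.log (pc c)) = -(pc c * Real.log (pc c)) := fun c => by ring
    rw [funext this]; exact hH
  -- step 1: rewrite LHS as a double sum
  have hLHS : ((∑ a, -(pa a * Real.log (pa a))) + (∑ b, -(pb b * Real.log (pb b)))
      - ∑ a, ∑ b, -(pab a b * Real.log (pab a b)))
      = ∑ a, ∑ b, pab a b * Real.log (pab a b / (pa a * pb b)) := by
    have h1 : (∑ a, -(pa a * Real.log (pa a))) = ∑ a, ∑ b, -(pab a b * Real.log (pa a)) := by
      apply Finset.sum_congr rfl; intro a _
      have e : pa a * Real.log (pa a) = ∑ b, pab a b * Real.log (pa a) := by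
        rw [← Finset.sum_mul, hmarg_a a]
      rw [e, ← Finset.sum_neg_distrib]
    have h2 : (∑ b, -(pb b * Real.log (pb b))) = ∑ a, ∑ b, -(pab a b * Real.log (pb b)) := by
      rw [Finset.sum_comm]
      apply Finset.sum_congr rfl; intro b _
      have e : pb b * Real.log (pb b) = ∑ a, pab a b * Real.log (pb b) := by
        rw [← Finset.sum_mul, hmarg_b b]
      rw [e, ← Finset.sum_neg_distrib]
    rw [h1, h2, ← Finset.sum_add_distrib, ← Finset.sum_sub_distrib]
    apply Finset.sum_congr rfl; intro a _
    rw [← Finset.sum_add_distrib, ← Finset.sum_sub_distrib]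
    apply Finset.sum_congr rfl; intro b _
    rcases eq_or_lt_of_le (hpab0 a b) with h | h
    · rw [← h]; ring
    · have hpa : 0 < pa a := lt_of_lt_of_le h (hpab_pa a b)
      have hpb : 0 < pb b := lt_of_lt_of_le h (hpab_pb a b)
      rw [Real.log_div (ne_of_gt h) (by positivity), Real.log_mul (ne_of_gt hpa) (ne_of_gt hpb)]
      ring
  rw [hLHS]
  -- termwise bound : u * log (u / (pa * pcb)) ≤ u * (- log pc)
  have hterm : ∀ a b c, u a c b * Real.log (u a c b / (pa a * pcb c b))
      ≤ u a c b * (-Real.log (pc c)) := by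
    intro a b c
    rcases eq_or_lt_of_le (hu0 a c b) with h | h
    · rw [← h]; simp
    · have hpcbpos : 0 < pcb c b := lt_of_lt_of_le h (hu_pcb a c b)
      have hpacpos : 0 < pac a c := lt_of_lt_of_le h (hu_pac a c b)
      have hpapos : 0 < pa a := lt_of_lt_of_le hpacpos (hpac_pa a c)
      have hpcpos : 0 < pc c := by
        by_contra hc
        push_neg at hc
        have : pc c = 0 := le_antisymm hc (hpc0 c)
        have := hci a c b
        rw [this] at *
        nlinarith [hci a c b]
      have harg : u a c b / (pa a * pcb c b) = pac a c / (pa a * pc c) := by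
        have h1 := hci a c b
        field_simp
        nlinarith [hci a c b]
      rw [harg]
      have hle2 : pac a c / (pa a * pc c) ≤ 1 / pc c := by
        rw [div_le_div_iff₀ (by positivity) hpcpos]
        calc pac a c * pc c ≤ pa a * pc c := by nlinarith [hpac_pa a c]
          _ = 1 * (pa a * pc c) := by ring
      have hlog := Real.log_le_log (by positivity) hle2
      rw [Real.log_div one_ne_zero (ne_of_gt hpcpos), Real.log_one] at hlog
      nlinarith [hlog]
  -- per (a,b) bound via Gibbs
  have hstep : ∀ a b, pab a b * Real.log (pab a b / (pa a * pb b))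
      ≤ ∑' c, u a c b * (-Real.log (pc c)) := by
    intro a b
    have hs' : Summable (fun c => pa a * pcb c b) := (hsum_pcb b).mul_left _
    -- summability of RHS family
    have hsumR : Summable (fun c => u a c b * (-Real.log (pc c))) := by
      apply Summable.of_nonneg_of_le
        (fun c => mul_nonneg (hu0 a c b) (hlnpc c))
        (fun c => mul_le_mul_of_nonneg_right (le_trans (hu_pcb a c b) (hpcb_pc c b)) (hlnpc c))
      exact hHS
    -- summability of the Gibbs family
    have hlow : ∀ c, u a c b - pa a * pcb c b ≤ u a c b * Real.log (u a c b / (pa a * pcb c b)) := by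
      intro c
      rcases eq_or_lt_of_le (hu0 a c b) with h | h
      · rw [← h]
        have : 0 ≤ pa a * pcb c b := mul_nonneg (hpa0 a) (hpcb0 c b)
        simp only [zero_mul, zero_sub]
        linarith
      · have hpcbpos : 0 < pcb c b := lt_of_lt_of_le h (hu_pcb a c b)
        have hpapos : 0 < pa a := lt_of_lt_of_le (lt_of_lt_of_le h (hu_pac a c b)) (hpac_pa a c)
        have hx : (0:ℝ) < pa a * pcb c b / u a c b := by positivity
        have hlog := Real.log_le_sub_one_of_pos hx
        have hrw : Real.log (u a c b / (pa a * pcb c b)) = - Real.log (pa a * pcb c b / u a c b) := by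
          rw [Real.log_div (ne_of_gt h) (by positivity), Real.log_div (by positivity) (ne_of_gt h)]
          ring
        rw [hrw]
        have h4 : u a c b * (1 - pa a * pcb c b / u a c b) = u a c b - pa a * pcb c b := by
          field_simp
        nlinarith [hlog]
    have hsumGibbs : Summable (fun c => u a c b * Real.log (u a c b / (pa a * pcb c b))) := by
      have hup : Summable (fun c => (u a c b * (-Real.log (pc c))) - (u a c b - pa a * pcb c b)) :=
        (hsumR.sub ((hsum_u a b).sub hs'))
      have h5 : Summable (fun c => (u a c b * Real.log (u a c b / (pa a * pcb c b)))
          - (u a c b - pa a * pcb c b)) := by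
        apply Summable.of_nonneg_of_le (fun c => by linarith [hlow c])
          (fun c => by linarith [hterm a b c]) hup
      have := h5.add ((hsum_u a b).sub hs')
      simpa using this
    have hgibbs := aux_gibbs (fun c => u a c b) (fun c => pa a * pcb c b)
      (fun c => hu0 a c b) (fun c => mul_nonneg (hpa0 a) (hpcb0 c b))
      (fun c hc => by
        have h : 0 < u a c b := lt_of_le_of_ne (hu0 a c b) (Ne.symm hc)
        have hpcbpos : 0 < pcb c b := lt_of_lt_of_le h (hu_pcb a c b)
        have hpapos : 0 < pa a := lt_of_lt_of_le (lt_of_lt_of_le h (hu_pac a c b)) (hpac_pa a c)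
        positivity)
      (hsum_u a b) hs' hsumGibbs
    rw [htsum_u a b, tsum_mul_left, htsum_pcb b] at hgibbs
    calc pab a b * Real.log (pab a b / (pa a * pb b))
        ≤ ∑' c, u a c b * Real.log (u a c b / (pa a * pcb c b)) := hgibbs
      _ ≤ ∑' c, u a c b * (-Real.log (pc c)) :=
          Summable.tsum_le_tsum (fun c => hterm a b c) hsumGibbs hsumR
  -- sum the per-(a,b) bounds and swap sums
  have hsumR : ∀ a b, Summable (fun c => u a c b * (-Real.log (pc c))) := by
    intro a b
    apply Summable.of_nonneg_of_le
      (fun c => mul_nonneg (hu0 a c b) (hlnpc c))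
      (fun c => mul_le_mul_of_nonneg_right (le_trans (hu_pcb a c b) (hpcb_pc c b)) (hlnpc c))
    exact hHS
  calc (∑ a, ∑ b, pab a b * Real.log (pab a b / (pa a * pb b)))
      ≤ ∑ a, ∑ b, ∑' c, u a c b * (-Real.log (pc c)) := by
        apply Finset.sum_le_sum; intro a _
        apply Finset.sum_le_sum; intro b _
        exact hstep a b
    _ = ∑ a, ∑' c, ∑ b, u a c b * (-Real.log (pc c)) :=
        Finset.sum_congr rfl (fun a _ => (Summable.tsum_finsetSum (fun b _ => hsumR a b)).symm)
    _ = ∑' c, ∑ a, ∑ b, u a c b * (-Real.log (pc c)) :=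
        (Summable.tsum_finsetSum (fun a _ => summable_sum (fun b _ => hsumR a b))).symm
    _ = ∑' c, -(pc c * Real.log (pc c)) := by
        apply tsum_congr; intro c
        simp only [← Finset.sum_mul]
        rw [hmarg_c c]
        ring

-- trajectory helpers
noncomputable def pastT {S : Type*} [Inhabited S] (n : ℕ) (z : Fin n → S) : ℤ → S :=
  fun j => if h : -(n:ℤ) < j ∧ j ≤ 0 then z ⟨(j + n - 1).toNat, by omega⟩ else default

noncomputable def futT {S : Type*} (n : ℕ) (c : S) (w : Fin n → S) : ℤ → S :=
  fun j => if h : 0 < j ∧ j ≤ (n:ℤ) then w ⟨(j - 1).toNat, by omega⟩ else c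

noncomputable def fullT {S : Type*} [Inhabited S] (n : ℕ) (c : S) (z w : Fin n → S) : ℤ → S :=
  fun j => if j ≤ 0 then pastT n z j else futT n c w j

lemma pastT_at {S : Type*} [Inhabited S] (n : ℕ) (z : Fin n → S) (i : Fin n) :
    pastT n z (-(n:ℤ) + 1 + (i:ℤ)) = z i := by
  have hi := i.isLt
  have h : -(n:ℤ) < -(n:ℤ)+1+(i:ℤ) ∧ -(n:ℤ)+1+(i:ℤ) ≤ 0 := by omega
  rw [pastT, dif_pos h]
  congr 1
  apply Fin.ext
  simp only
  omega

lemma pastT_eq {S : Type*} [Inhabited S] (n : ℕ) (z : Fin n → S) (j : ℤ)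
    (h1 : -(n:ℤ) < j) (h2 : j ≤ 0) :
    pastT n z j = z ⟨(j + n - 1).toNat, by omega⟩ := dif_pos ⟨h1, h2⟩

lemma futT_at {S : Type*} (n : ℕ) (c : S) (w : Fin n → S) (i : Fin n) :
    futT n c w (1 + (i:ℤ)) = w i := by
  have hi := i.isLt
  have h : 0 < 1+(i:ℤ) ∧ 1+(i:ℤ) ≤ (n:ℤ) := by omega
  rw [futT, dif_pos h]
  congr 1
  apply Fin.ext
  simp only
  omega

lemma futT_eq {S : Type*} (n : ℕ) (c : S) (w : Fin n → S) (j : ℤ)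
    (h1 : 0 < j) (h2 : j ≤ (n:ℤ)) :
    futT n c w j = w ⟨(j - 1).toNat, by omega⟩ := dif_pos ⟨h1, h2⟩

lemma futT_zero {S : Type*} (n : ℕ) (c : S) (w : Fin n → S) : futT n c w 0 = c := by
  rw [futT, dif_neg]; omega

lemma fullT_past {S : Type*} [Inhabited S] (n : ℕ) (c : S) (z w : Fin n → S) (j : ℤ)
    (h : j ≤ 0) : fullT n c z w j = pastT n z j := if_pos h

lemma fullT_fut {S : Type*} [Inhabited S] (n : ℕ) (c : S) (z w : Fin n → S) (j : ℤ)
    (h : 0 < j) : fullT n c z w j = futT n c w j := if_neg (by omega)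

lemma pastT_zero {S : Type*} [Inhabited S] (n : ℕ) (hn : 1 ≤ n) (z : Fin n → S) :
    pastT n z 0 = z ⟨n - 1, by omega⟩ := by
  rw [pastT_eq n z 0 (by omega) le_rfl]
  congr 1
  apply Fin.ext
  simp only
  omega

lemma aux_prod_Ico_split (f : ℤ → ℝ) (m n k : ℤ) (h1 : m ≤ n) (h2 : n ≤ k) :
    (∏ j ∈ Finset.Ico m k, f j) = (∏ j ∈ Finset.Ico m n, f j) * ∏ j ∈ Finset.Ico n k, f j := by
  rw [← Finset.Ico_union_Ico_eq_Ico h1 h2, Finset.prod_union]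
  exact Finset.Ico_disjoint_Ico_consecutive m n k

lemma mem_cyl {Ω S : Type*} (Y : ℤ → Ω → S) (p q : ℤ) (y : ℤ → S) (ω : Ω) :
    ω ∈ ⋂ j ∈ Set.Icc p q, (Y j) ⁻¹' {y j} ↔ ∀ j, p ≤ j → j ≤ q → Y j ω = y j := by
  simp [Set.mem_Icc]

lemma cyl_measurable {Ω S : Type*} [MeasurableSpace Ω] [MeasurableSpace S]
    [MeasurableSingletonClass S] (Y : ℤ → Ω → S) (hY : ∀ i, Measurable (Y i))
    (p q : ℤ) (y : ℤ → S) :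
    MeasurableSet (⋂ j ∈ Set.Icc p q, (Y j) ⁻¹' {y j}) :=
  MeasurableSet.biInter (Set.to_countable _)
    (fun j _ => hY j (measurableSet_singleton _))

lemma aux_ci {Ω S 𝕏 : Type*} [MeasurableSpace Ω] (μ : MeasureTheory.Measure Ω)
    [MeasureTheory.IsProbabilityMeasure μ]
    [MeasurableSpace S] [MeasurableSingletonClass S] [Countable S] [Inhabited S]
    (Y : ℤ → Ω → S) (hY : ∀ i, Measurable (Y i)) (Q : S → S → ℝ) (hQ : IsMarkovWith μ Y Q)
    (f : S → 𝕏) (X : ℤ → Ω → 𝕏) (hX : ∀ i ω, X i ω = f (Y i ω))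
    (n : ℕ) (hn : 1 ≤ n) (a b : Fin n → 𝕏) (c : S) :
    pr μ (pastBlock X n ⁻¹' {a} ∩ futureBlock X n ⁻¹' {b} ∩ Y 0 ⁻¹' {c}) * pr μ (Y 0 ⁻¹' {c})
    = pr μ (pastBlock X n ⁻¹' {a} ∩ Y 0 ⁻¹' {c})
      * pr μ (futureBlock X n ⁻¹' {b} ∩ Y 0 ⁻¹' {c}) := by
  classical
  set ZA := {z : Fin n → S // (∀ i, f (z i) = a i) ∧ z ⟨n-1, by omega⟩ = c} with hZA
  set WB := {w : Fin n → S // ∀ i, f (w i) = b i} with hWB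
  -- the three cylinder families
  set EP : (Fin n → S) → Set Ω := fun z => ⋂ j ∈ Set.Icc (-(n:ℤ)+1) 0, (Y j) ⁻¹' {pastT n z j}
    with hEP
  set EF : (Fin n → S) → Set Ω := fun w => ⋂ j ∈ Set.Icc (0:ℤ) (n:ℤ), (Y j) ⁻¹' {futT n c w j}
    with hEF
  set EA : (Fin n → S) → (Fin n → S) → Set Ω :=
    fun z w => ⋂ j ∈ Set.Icc (-(n:ℤ)+1) (n:ℤ), (Y j) ⁻¹' {fullT n c z w j} with hEA
  -- set identities
  have setP : pastBlock X n ⁻¹' {a} ∩ Y 0 ⁻¹' {c} = ⋃ z : ZA, EP z.1 := by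
    ext ω
    simp only [Set.mem_inter_iff, Set.mem_preimage, Set.mem_singleton_iff, Set.mem_iUnion,
      funext_iff, pastBlock, futureBlock, hEP, mem_cyl]
    constructor
    · rintro ⟨hA, hC⟩
      refine ⟨⟨fun i => Y (-(n:ℤ)+1+(i:ℤ)) ω, fun i => ?_, ?_⟩, fun j hj1 hj2 => ?_⟩
      · rw [← hX]; exact hA i
      · have e : (-(n:ℤ)+1+((⟨n-1, by omega⟩ : Fin n):ℤ)) = 0 := by
          simp only [Fin.val_mk]; omega
        simp only [e]; exact hC
      · rw [pastT_eq n _ j (by omega) hj2]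
        simp only [Fin.val_mk]
        congr 1
        omega
    · rintro ⟨⟨z, hz1, hz2⟩, hω⟩
      constructor
      · intro i
        have hi := i.isLt
        have h := hω (-(n:ℤ)+1+(i:ℤ)) (by omega) (by omega)
        rw [hX, h, pastT_at]
        exact hz1 i
      · have h := hω 0 (by omega) (by omega)
        rw [h, pastT_zero n hn z]
        exact hz2
  have setF : futureBlock X n ⁻¹' {b} ∩ Y 0 ⁻¹' {c} = ⋃ w : WB, EF w.1 := by
    ext ω
    simp only [Set.mem_inter_iff, Set.mem_preimage, Set.mem_singleton_iff, Set.mem_iUnion,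
      funext_iff, pastBlock, futureBlock, hEF, mem_cyl]
    constructor
    · rintro ⟨hB, hC⟩
      refine ⟨⟨fun i => Y (1+(i:ℤ)) ω, fun i => ?_⟩, fun j hj1 hj2 => ?_⟩
      · rw [← hX]; exact hB i
      · rcases eq_or_lt_of_le hj1 with h0 | h0
        · rw [← h0, futT_zero]; exact hC
        · rw [futT_eq n c _ j h0 hj2]
          simp only [Fin.val_mk]
          congr 1
          omega
    · rintro ⟨⟨w, hw⟩, hω⟩
      constructor
      · intro i
        have hi := i.isLt
        have h := hω (1+(i:ℤ)) (by omega) (by omega)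
        rw [hX, h, futT_at]
        exact hw i
      · have h := hω 0 le_rfl (by omega)
        rw [h, futT_zero]
  have setA : pastBlock X n ⁻¹' {a} ∩ futureBlock X n ⁻¹' {b} ∩ Y 0 ⁻¹' {c}
      = ⋃ p : ZA × WB, EA p.1.1 p.2.1 := by
    ext ω
    simp only [Set.mem_inter_iff, Set.mem_preimage, Set.mem_singleton_iff, Set.mem_iUnion,
      funext_iff, pastBlock, futureBlock, hEA, mem_cyl]
    constructor
    · rintro ⟨⟨hA, hB⟩, hC⟩
      refine ⟨⟨⟨fun i => Y (-(n:ℤ)+1+(i:ℤ)) ω, fun i => ?_, ?_⟩,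
        ⟨fun i => Y (1+(i:ℤ)) ω, fun i => ?_⟩⟩, fun j hj1 hj2 => ?_⟩
      · rw [← hX]; exact hA i
      · have e : (-(n:ℤ)+1+((⟨n-1, by omega⟩ : Fin n):ℤ)) = 0 := by
          simp only [Fin.val_mk]; omega
        simp only [e]; exact hC
      · rw [← hX]; exact hB i
      · rcases le_or_gt j 0 with h0 | h0
        · rw [fullT_past n c _ _ j h0, pastT_eq n _ j (by omega) h0]
          simp only [Fin.val_mk]
          congr 1
          omega
        · rw [fullT_fut n c _ _ j h0, futT_eq n c _ j h0 hj2]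
          simp only [Fin.val_mk]
          congr 1
          omega
    · rintro ⟨⟨⟨z, hz1, hz2⟩, ⟨w, hw⟩⟩, hω⟩
      refine ⟨⟨fun i => ?_, fun i => ?_⟩, ?_⟩
      · have hi := i.isLt
        have h := hω (-(n:ℤ)+1+(i:ℤ)) (by omega) (by omega)
        rw [fullT_past n c _ _ _ (by omega), pastT_at] at h
        rw [hX, h]
        exact hz1 i
      · have hi := i.isLt
        have h := hω (1+(i:ℤ)) (by omega) (by omega)
        rw [fullT_fut n c _ _ _ (by omega), futT_at] at h
        rw [hX, h]
        exact hw i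
      · have h := hω 0 (by omega) (by omega)
        rw [fullT_past n c _ _ 0 le_rfl, pastT_zero n hn z] at h
        rw [h]
        exact hz2
  -- membership extraction helpers
  have memP : ∀ (z : Fin n → S) (ω : Ω), ω ∈ EP z → ∀ i : Fin n, Y (-(n:ℤ)+1+(i:ℤ)) ω = z i := by
    intro z ω hω i
    have hi := i.isLt
    have h := (mem_cyl Y _ _ _ ω).mp hω (-(n:ℤ)+1+(i:ℤ)) (by omega) (by omega)
    rw [h, pastT_at]
  have memF : ∀ (w : Fin n → S) (ω : Ω), ω ∈ EF w → ∀ i : Fin n, Y (1+(i:ℤ)) ω = w i := by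
    intro w ω hω i
    have hi := i.isLt
    have h := (mem_cyl Y _ _ _ ω).mp hω (1+(i:ℤ)) (by omega) (by omega)
    rw [h, futT_at]
  have memA1 : ∀ (z w : Fin n → S) (ω : Ω), ω ∈ EA z w →
      ∀ i : Fin n, Y (-(n:ℤ)+1+(i:ℤ)) ω = z i := by
    intro z w ω hω i
    have hi := i.isLt
    have h := (mem_cyl Y _ _ _ ω).mp hω (-(n:ℤ)+1+(i:ℤ)) (by omega) (by omega)
    rw [h, fullT_past n c z w _ (by omega), pastT_at]
  have memA2 : ∀ (z w : Fin n → S) (ω : Ω), ω ∈ EA z w →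
      ∀ i : Fin n, Y (1+(i:ℤ)) ω = w i := by
    intro z w ω hω i
    have hi := i.isLt
    have h := (mem_cyl Y _ _ _ ω).mp hω (1+(i:ℤ)) (by omega) (by omega)
    rw [h, fullT_fut n c z w _ (by omega), futT_at]
  -- disjointness
  have disjP : Pairwise (Function.onFun Disjoint (fun z : ZA => EP z.1)) := by
    intro z z' hne
    rw [Function.onFun, Set.disjoint_left]
    intro ω hω hω'
    exact hne (Subtype.ext (funext fun i => (memP z.1 ω hω i).symm.trans (memP z'.1 ω hω' i)))
  have disjF : Pairwise (Function.onFun Disjoint (fun w : WB => EF w.1)) := by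
    intro w w' hne
    rw [Function.onFun, Set.disjoint_left]
    intro ω hω hω'
    exact hne (Subtype.ext (funext fun i => (memF w.1 ω hω i).symm.trans (memF w'.1 ω hω' i)))
  have disjA : Pairwise (Function.onFun Disjoint (fun p : ZA × WB => EA p.1.1 p.2.1)) := by
    intro p p' hne
    rw [Function.onFun, Set.disjoint_left]
    intro ω hω hω'
    apply hne
    have hz : p.1 = p'.1 := Subtype.ext (funext fun i =>
      (memA1 _ _ ω hω i).symm.trans (memA1 _ _ ω hω' i))
    have hw : p.2 = p'.2 := Subtype.ext (funext fun i =>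
      (memA2 _ _ ω hω i).symm.trans (memA2 _ _ ω hω' i))
    exact Prod.ext hz hw
  -- measure decompositions
  have hμP : μ (pastBlock X n ⁻¹' {a} ∩ Y 0 ⁻¹' {c}) = ∑' z : ZA, μ (EP z.1) := by
    rw [setP]
    exact MeasureTheory.measure_iUnion disjP (fun z => cyl_measurable Y hY _ _ _)
  have hμF : μ (futureBlock X n ⁻¹' {b} ∩ Y 0 ⁻¹' {c}) = ∑' w : WB, μ (EF w.1) := by
    rw [setF]
    exact MeasureTheory.measure_iUnion disjF (fun w => cyl_measurable Y hY _ _ _)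
  have hμA : μ (pastBlock X n ⁻¹' {a} ∩ futureBlock X n ⁻¹' {b} ∩ Y 0 ⁻¹' {c})
      = ∑' p : ZA × WB, μ (EA p.1.1 p.2.1) := by
    rw [setA]
    exact MeasureTheory.measure_iUnion disjA (fun p => cyl_measurable Y hY _ _ _)
  -- pointwise factorization from the Markov property
  have key : ∀ (z w : Fin n → S), z ⟨n-1, by omega⟩ = c →
      pr μ (EA z w) * pr μ (Y 0 ⁻¹' {c}) = pr μ (EP z) * pr μ (EF w) := by
    intro z w hz2
    have prA := hQ (-(n:ℤ)+1) n (by omega) (fullT n c z w)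
    have prP := hQ (-(n:ℤ)+1) 0 (by omega) (pastT n z)
    have prF := hQ 0 n (by omega) (futT n c w)
    rw [hEA, hEP, hEF]
    simp only
    rw [prA, prP, prF]
    rw [aux_prod_Ico_split _ (-(n:ℤ)+1) 0 n (by omega) (by omega)]
    have e1 : ∏ j ∈ Finset.Ico (-(n:ℤ)+1) 0, Q (fullT n c z w j) (fullT n c z w (j+1))
        = ∏ j ∈ Finset.Ico (-(n:ℤ)+1) 0, Q (pastT n z j) (pastT n z (j+1)) := by
      refine Finset.prod_congr rfl (fun j hj => ?_)
      rw [Finset.mem_Ico] at hj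
      rw [fullT_past n c z w j (by omega), fullT_past n c z w (j+1) (by omega)]
    have e2 : ∏ j ∈ Finset.Ico (0:ℤ) (n:ℤ), Q (fullT n c z w j) (fullT n c z w (j+1))
        = ∏ j ∈ Finset.Ico (0:ℤ) (n:ℤ), Q (futT n c w j) (futT n c w (j+1)) := by
      refine Finset.prod_congr rfl (fun j hj => ?_)
      rw [Finset.mem_Ico] at hj
      have hj1 : fullT n c z w (j+1) = futT n c w (j+1) := fullT_fut n c z w (j+1) (by omega)
      have hj0 : fullT n c z w j = futT n c w j := by
        rcases eq_or_lt_of_le hj.1 with h0 | h0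
        · rw [← h0, fullT_past n c z w 0 le_rfl, pastT_zero n hn z, hz2, futT_zero]
        · exact fullT_fut n c z w j h0
      rw [hj0, hj1]
    have e3 : fullT n c z w (-(n:ℤ)+1) = pastT n z (-(n:ℤ)+1) :=
      fullT_past _ _ _ _ _ (by omega)
    have e4 : futT n c w 0 = c := futT_zero n c w
    rw [e1, e2, e3, e4]
    ring
  have keyE : ∀ (z : ZA) (w : WB),
      μ (EA z.1 w.1) * μ (Y 0 ⁻¹' {c}) = μ (EP z.1) * μ (EF w.1) := by
    intro z w
    have h := key z.1 w.1 z.2.2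
    rw [← ENNReal.toReal_eq_toReal_iff'
      (ENNReal.mul_ne_top (MeasureTheory.measure_ne_top μ _) (MeasureTheory.measure_ne_top μ _))
      (ENNReal.mul_ne_top (MeasureTheory.measure_ne_top μ _) (MeasureTheory.measure_ne_top μ _)),
      ENNReal.toReal_mul, ENNReal.toReal_mul]
    exact h
  have main : μ (pastBlock X n ⁻¹' {a} ∩ futureBlock X n ⁻¹' {b} ∩ Y 0 ⁻¹' {c})
      * μ (Y 0 ⁻¹' {c})
      = μ (pastBlock X n ⁻¹' {a} ∩ Y 0 ⁻¹' {c}) * μ (futureBlock X n ⁻¹' {b} ∩ Y 0 ⁻¹' {c}) := by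
    rw [hμA, hμP, hμF, ← ENNReal.tsum_mul_right]
    calc ∑' p : ZA × WB, μ (EA p.1.1 p.2.1) * μ (Y 0 ⁻¹' {c})
        = ∑' p : ZA × WB, μ (EP p.1.1) * μ (EF p.2.1) := tsum_congr (fun p => keyE p.1 p.2)
      _ = (∑' z : ZA, μ (EP z.1)) * (∑' w : WB, μ (EF w.1)) := by
          rw [ENNReal.tsum_prod']
          calc ∑' (z : ZA), ∑' (w : WB), μ (EP z.1) * μ (EF w.1)
              = ∑' (z : ZA), μ (EP z.1) * ∑' (w : WB), μ (EF w.1) :=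
                tsum_congr (fun _ => ENNReal.tsum_mul_left)
            _ = _ := ENNReal.tsum_mul_right
  show (μ _).toReal * (μ _).toReal = (μ _).toReal * (μ _).toReal
  rw [← ENNReal.toReal_mul, ← ENNReal.toReal_mul, main]

lemma aux_partition {Ω ι : Type*} [MeasurableSpace Ω] (μ : MeasureTheory.Measure Ω)
    [MeasureTheory.IsProbabilityMeasure μ] [Countable ι] (E : Set Ω) (hE : MeasurableSet E)
    (g : Ω → ι) (hg : ∀ i, MeasurableSet (g ⁻¹' {i})) :
    Summable (fun i => pr μ (E ∩ g ⁻¹' {i})) ∧ (∑' i, pr μ (E ∩ g ⁻¹' {i})) = pr μ E := by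
  have hU : E = ⋃ i, E ∩ g ⁻¹' {i} := by
    ext ω
    simp only [Set.mem_iUnion, Set.mem_inter_iff, Set.mem_preimage, Set.mem_singleton_iff]
    exact ⟨fun h => ⟨g ω, h, rfl⟩, fun ⟨i, h, _⟩ => h⟩
  have hdisj : Pairwise (Function.onFun Disjoint (fun i => E ∩ g ⁻¹' {i})) := by
    intro i j hij
    rw [Function.onFun, Set.disjoint_left]
    rintro ω ⟨_, h1⟩ ⟨_, h2⟩
    rw [Set.mem_preimage, Set.mem_singleton_iff] at h1 h2
    exact hij (h1 ▸ h2)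
  have hμ : μ E = ∑' i, μ (E ∩ g ⁻¹' {i}) := by
    conv_lhs => rw [hU]
    exact MeasureTheory.measure_iUnion hdisj (fun i => hE.inter (hg i))
  constructor
  · apply ENNReal.summable_toReal
    rw [← hμ]
    exact MeasureTheory.measure_ne_top μ E
  · rw [pr, hμ, ENNReal.tsum_toReal_eq (fun i => MeasureTheory.measure_ne_top μ _)]
    rfl

/-- If the observable process `X_i = f(Y_i)` of a stationary countable-state Markov chain
has unbounded block mutual information `E(n) = I(X_{-n+1}^0; X_1^n) → ∞`, then
`H(Y_0) = ∞`; in particular `Y_0` takes infinitely many values with positive probability. -/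
theorem entropy_infinite_of_unbounded_blockMI
    {Ω S 𝕏 : Type*} [MeasurableSpace Ω] (μ : Measure Ω) [IsProbabilityMeasure μ]
    [MeasurableSpace S] [MeasurableSingletonClass S] [Countable S] [Fintype 𝕏]
    (Y : ℤ → Ω → S) (hY : ∀ i, Measurable (Y i))
    (hMarkov : ∃ Q : S → S → ℝ, IsMarkovWith μ Y Q)
    (f : S → 𝕏) (X : ℤ → Ω → 𝕏) (hX : ∀ i ω, X i ω = f (Y i ω))
    (hdiv : Filter.Tendsto (fun n : ℕ => MI μ (pastBlock X n) (futureBlock X n))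
      Filter.atTop Filter.atTop) :
    HentE μ (Y 0) = ⊤ ∧ {s : S | 0 < pr μ ((Y 0) ⁻¹' {s})}.Infinite := by
  classical
  -- Part A : infinite entropy
  have hmain : HentE μ (Y 0) = ⊤ := by
    by_contra hne
    obtain ⟨Q, hQ⟩ := hMarkov
    haveI hΩ : Nonempty Ω := by
      by_contra h
      rw [not_nonempty_iff] at h
      have h1 : μ Set.univ = 1 := MeasureTheory.measure_univ
      rw [Set.univ_eq_empty_iff.mpr h, MeasureTheory.measure_empty] at h1
      exact one_ne_zero h1.symm
    haveI : Inhabited S := ⟨Y 0 (Classical.arbitrary Ω)⟩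
    have hlog2pos : (0:ℝ) < Real.log 2 := Real.log_pos one_lt_two
    have pr0 : ∀ s : Set Ω, 0 ≤ pr μ s := fun s => ENNReal.toReal_nonneg
    have pr1 : ∀ s : Set Ω, pr μ s ≤ 1 := by
      intro s
      have h := MeasureTheory.prob_le_one (μ := μ) (s := s)
      have := ENNReal.toReal_mono ENNReal.one_ne_top h
      simpa [pr] using this
    have prmono : ∀ s t : Set Ω, s ⊆ t → pr μ s ≤ pr μ t := fun s t h =>
      ENNReal.toReal_mono (MeasureTheory.measure_ne_top μ t) (MeasureTheory.measure_mono h)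
    have hgY : ∀ c : S, MeasurableSet ((Y 0) ⁻¹' {c}) :=
      fun c => hY 0 (measurableSet_singleton _)
    -- entropy of Y 0 : summability and value
    have he0 : ∀ c : S, 0 ≤ -(pr μ ((Y 0) ⁻¹' {c}) * log2 (pr μ ((Y 0) ⁻¹' {c}))) := by
      intro c
      rcases eq_or_lt_of_le (pr0 ((Y 0) ⁻¹' {c})) with h | h
      · rw [← h]; simp
      · have hl : Real.log (pr μ ((Y 0) ⁻¹' {c})) ≤ 0 := Real.log_nonpos h.le (pr1 _)
        have : log2 (pr μ ((Y 0) ⁻¹' {c})) ≤ 0 := div_nonpos_of_nonpos_of_nonneg hl hlog2pos.le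
        nlinarith
    have hHrepr : (HentE μ (Y 0)).toReal
        = ∑' c : S, -(pr μ ((Y 0) ⁻¹' {c}) * log2 (pr μ ((Y 0) ⁻¹' {c}))) := by
      rw [HentE, ENNReal.tsum_toReal_eq (fun c => ENNReal.ofReal_ne_top)]
      exact tsum_congr fun c => ENNReal.toReal_ofReal (he0 c)
    have hsumE : Summable (fun c : S => -(pr μ ((Y 0) ⁻¹' {c}) * log2 (pr μ ((Y 0) ⁻¹' {c})))) := by
      have h1 := ENNReal.summable_toReal hne
      have h2 : (fun c : S => (ENNReal.ofReal
          (-(pr μ ((Y 0) ⁻¹' {c}) * log2 (pr μ ((Y 0) ⁻¹' {c}))))).toReal)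
          = fun c : S => -(pr μ ((Y 0) ⁻¹' {c}) * log2 (pr μ ((Y 0) ⁻¹' {c}))) :=
        funext fun c => ENNReal.toReal_ofReal (he0 c)
      rw [← h2]
      exact h1
    have hnat : ∀ x : ℝ, -(x * log2 x) * Real.log 2 = -(x * Real.log x) := by
      intro x
      rw [log2]
      field_simp
    have hsumN : Summable (fun c : S =>
        -(pr μ ((Y 0) ⁻¹' {c}) * Real.log (pr μ ((Y 0) ⁻¹' {c})))) := by
      have h1 := hsumE.mul_right (Real.log 2)
      have h2 : (fun c : S => -(pr μ ((Y 0) ⁻¹' {c}) * log2 (pr μ ((Y 0) ⁻¹' {c}))) * Real.log 2)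
          = fun c : S => -(pr μ ((Y 0) ⁻¹' {c}) * Real.log (pr μ ((Y 0) ⁻¹' {c}))) :=
        funext fun c => hnat _
      rw [← h2]
      exact h1
    have htsumN : ∑' c : S, -(pr μ ((Y 0) ⁻¹' {c}) * Real.log (pr μ ((Y 0) ⁻¹' {c})))
        = (HentE μ (Y 0)).toReal * Real.log 2 := by
      rw [hHrepr, ← tsum_mul_right]
      exact tsum_congr fun c => (hnat _).symm
    have hsum_pc : Summable (fun c : S => pr μ ((Y 0) ⁻¹' {c})) := by
      have h := (aux_partition μ Set.univ MeasurableSet.univ (Y 0) hgY).1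
      simpa [Set.univ_inter] using h
    -- the uniform bound
    have hbound : ∀ n : ℕ, 1 ≤ n →
        MI μ (pastBlock X n) (futureBlock X n) ≤ (HentE μ (Y 0)).toReal := by
      intro n hn
      have hfS : ∀ x : 𝕏, MeasurableSet (f ⁻¹' {x}) := fun x => (Set.to_countable _).measurableSet
      have hmA : ∀ a : Fin n → 𝕏, MeasurableSet (pastBlock X n ⁻¹' {a}) := by
        intro a
        have h : pastBlock X n ⁻¹' {a}
            = ⋂ i : Fin n, (Y (-(n:ℤ)+1+(i:ℤ))) ⁻¹' (f ⁻¹' {a i}) := by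
          ext ω
          simp [pastBlock, funext_iff, hX]
        rw [h]
        exact MeasurableSet.iInter (fun i => hY _ (hfS _))
      have hmB : ∀ b : Fin n → 𝕏, MeasurableSet (futureBlock X n ⁻¹' {b}) := by
        intro b
        have h : futureBlock X n ⁻¹' {b}
            = ⋂ i : Fin n, (Y (1+(i:ℤ))) ⁻¹' (f ⁻¹' {b i}) := by
          ext ω
          simp [futureBlock, funext_iff, hX]
        rw [h]
        exact MeasurableSet.iInter (fun i => hY _ (hfS _))
      have hgset : ∀ p : (Fin n → 𝕏) × (Fin n → 𝕏),
          (fun ω => (pastBlock X n ω, futureBlock X n ω)) ⁻¹' {p}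
          = pastBlock X n ⁻¹' {p.1} ∩ futureBlock X n ⁻¹' {p.2} := by
        intro p
        ext ω
        simp [Prod.ext_iff]
      have hmarg_c : ∀ c : S,
          (∑ a : Fin n → 𝕏, ∑ b : Fin n → 𝕏,
            pr μ (pastBlock X n ⁻¹' {a} ∩ futureBlock X n ⁻¹' {b} ∩ (Y 0) ⁻¹' {c}))
          = pr μ ((Y 0) ⁻¹' {c}) := by
        intro c
        have hmg : ∀ p : (Fin n → 𝕏) × (Fin n → 𝕏),
            MeasurableSet ((fun ω => (pastBlock X n ω, futureBlock X n ω)) ⁻¹' {p}) := by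
          intro p
          rw [hgset]
          exact (hmA _).inter (hmB _)
        have h := (aux_partition μ ((Y 0) ⁻¹' {c}) (hgY c) _ hmg).2
        rw [tsum_fintype, Fintype.sum_prod_type] at h
        rw [← h]
        refine Finset.sum_congr rfl fun a _ => Finset.sum_congr rfl fun b _ => ?_
        rw [hgset, Set.inter_comm]
      have hmarg_a : ∀ a : Fin n → 𝕏,
          (∑ b : Fin n → 𝕏, pr μ (pastBlock X n ⁻¹' {a} ∩ futureBlock X n ⁻¹' {b}))
          = pr μ (pastBlock X n ⁻¹' {a}) := by
        intro a
        have h := (aux_partition μ _ (hmA a) (futureBlock X n) (fun b => hmB b)).2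
        rw [tsum_fintype] at h
        exact h
      have hmarg_b : ∀ b : Fin n → 𝕏,
          (∑ a : Fin n → 𝕏, pr μ (pastBlock X n ⁻¹' {a} ∩ futureBlock X n ⁻¹' {b}))
          = pr μ (futureBlock X n ⁻¹' {b}) := by
        intro b
        have h := (aux_partition μ _ (hmB b) (pastBlock X n) (fun a => hmA a)).2
        rw [tsum_fintype] at h
        rw [← h]
        exact Finset.sum_congr rfl fun a _ => by rw [Set.inter_comm]
      have happly := aux_main
        (fun a => pr μ (pastBlock X n ⁻¹' {a}))
        (fun b => pr μ (futureBlock X n ⁻¹' {b}))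
        (fun a b => pr μ (pastBlock X n ⁻¹' {a} ∩ futureBlock X n ⁻¹' {b}))
        (fun c => pr μ ((Y 0) ⁻¹' {c}))
        (fun a c => pr μ (pastBlock X n ⁻¹' {a} ∩ (Y 0) ⁻¹' {c}))
        (fun c b => pr μ (futureBlock X n ⁻¹' {b} ∩ (Y 0) ⁻¹' {c}))
        (fun a c b => pr μ (pastBlock X n ⁻¹' {a} ∩ futureBlock X n ⁻¹' {b} ∩ (Y 0) ⁻¹' {c}))
        (fun a c b => pr0 _) (fun c b => pr0 _) (fun a c => pr0 _) (fun c => pr0 _)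
        (fun c => pr1 _)
        (fun a c b => prmono _ _ (Set.inter_subset_inter_left _ Set.inter_subset_left))
        (fun a c b => prmono _ _ (Set.inter_subset_inter_left _ Set.inter_subset_right))
        (fun a c => prmono _ _ Set.inter_subset_left)
        (fun c b => prmono _ _ Set.inter_subset_right)
        (fun a c b => aux_ci μ Y hY Q hQ f X hX n hn a b c)
        hsum_pc
        (fun a b => (aux_partition μ _ ((hmA a).inter (hmB b)) (Y 0) hgY).2)
        (fun b => (aux_partition μ _ (hmB b) (Y 0) hgY).2)
        hmarg_c hmarg_a hmarg_b hsumN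
      rw [htsumN] at happly
      have hMIeq : MI μ (pastBlock X n) (futureBlock X n) * Real.log 2
          = (∑ a : Fin n → 𝕏, -(pr μ (pastBlock X n ⁻¹' {a})
              * Real.log (pr μ (pastBlock X n ⁻¹' {a}))))
            + (∑ b : Fin n → 𝕏, -(pr μ (futureBlock X n ⁻¹' {b})
              * Real.log (pr μ (futureBlock X n ⁻¹' {b}))))
            - ∑ a : Fin n → 𝕏, ∑ b : Fin n → 𝕏,
              -(pr μ (pastBlock X n ⁻¹' {a} ∩ futureBlock X n ⁻¹' {b})
              * Real.log (pr μ (pastBlock X n ⁻¹' {a} ∩ futureBlock X n ⁻¹' {b}))) := by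
        rw [MI, Hent, Hent, Hent, tsum_fintype, tsum_fintype, tsum_fintype]
        have e3 : (∑ p : (Fin n → 𝕏) × (Fin n → 𝕏),
            -(pr μ ((fun ω => (pastBlock X n ω, futureBlock X n ω)) ⁻¹' {p})
              * log2 (pr μ ((fun ω => (pastBlock X n ω, futureBlock X n ω)) ⁻¹' {p}))))
            = ∑ a : Fin n → 𝕏, ∑ b : Fin n → 𝕏,
              -(pr μ (pastBlock X n ⁻¹' {a} ∩ futureBlock X n ⁻¹' {b})
              * log2 (pr μ (pastBlock X n ⁻¹' {a} ∩ futureBlock X n ⁻¹' {b}))) := by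
          rw [Fintype.sum_prod_type]
          exact Finset.sum_congr rfl fun a _ => Finset.sum_congr rfl fun b _ => by rw [hgset]
        rw [e3, sub_mul, add_mul, Finset.sum_mul, Finset.sum_mul, Finset.sum_mul]
        simp only [Finset.sum_mul, hnat]
      have hfin : MI μ (pastBlock X n) (futureBlock X n) * Real.log 2
          ≤ (HentE μ (Y 0)).toReal * Real.log 2 := by

        rw [hMIeq]
        exact happly
      exact le_of_mul_le_mul_right hfin hlog2pos
    obtain ⟨n, hn1, hn2⟩ := ((hdiv.eventually_gt_atTop (HentE μ (Y 0)).toReal).and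
      (Filter.eventually_ge_atTop 1)).exists
    exact absurd (hbound n hn2) (not_le.mpr hn1)
  refine ⟨hmain, ?_⟩
  -- Part B : the support must be infinite
  by_contra hfin
  rw [Set.not_infinite] at hfin
  have hzero : ∀ s ∉ hfin.toFinset,
      ENNReal.ofReal (-(pr μ ((Y 0) ⁻¹' {s}) * log2 (pr μ ((Y 0) ⁻¹' {s})))) = 0 := by
    intro s hs
    rw [Set.Finite.mem_toFinset] at hs
    simp only [Set.mem_setOf_eq, not_lt] at hs
    have h0 : pr μ ((Y 0) ⁻¹' {s}) = 0 := le_antisymm hs ENNReal.toReal_nonneg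
    rw [h0]
    simp
  have hfinval : HentE μ (Y 0) = ∑ s ∈ hfin.toFinset,
      ENNReal.ofReal (-(pr μ ((Y 0) ⁻¹' {s}) * log2 (pr μ ((Y 0) ⁻¹' {s})))) := by
    rw [HentE]
    exact tsum_eq_sum hzero
  rw [hmain] at hfinval
  have : (∑ s ∈ hfin.toFinset,
      ENNReal.ofReal (-(pr μ ((Y 0) ⁻¹' {s}) * log2 (pr μ ((Y 0) ⁻¹' {s}))))) ≠ ⊤ :=
    (ENNReal.sum_lt_top.mpr (fun s _ => ENNReal.ofReal_lt_top)).ne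
  exact this hfinval.symm
end
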